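/- Let n ≥ 2, let I ⊆ ℝ be an open interval, let S ⊆ {0,1,…,n−1}, and let f ∈ C^n(I). Suppose that the inequality f(a_1)+…+f(a_n) ≤ f(b_1)+…+f(b_n) holds for all a, b ∈ I^n with a_1 ≤ … ≤ a_n and b_1 ≤ … ≤ b_n satisfying E_k(a) ≤ E_k(b) for all k ∈ S and E_k(a) = E_k(b) for all k ∈ {0,1,…,n−1} \ S. Then (−1)^{n+k}(x^k f'(x))^{(n−1)} ≤ 0 for all x ∈ I and all k ∈ S. -/

import Mathlib

/-- Reversed elementary symmetric polynomials:
`E n k y = e_{n-k}(y₁,…,yₙ)`, the sum of all products of `n - k` of the coordinates. -/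
def E (n k : ℕ) (y : Fin n → ℝ) : ℝ :=
  ∑ t ∈ (Finset.univ : Finset (Fin n)).powersetCard (n - k), ∏ i ∈ t, y i

open Set Finset Polynomial Filter Topology

lemma coeff_prod_X_sub_C' (n j : ℕ) (y : Fin n → ℝ) (hj : j ≤ n) :
    (∏ i, (X - C (y i))).coeff j = (-1) ^ (n - j) * E n j y := by
  have h1 : (∏ i, (X - C (y i))) = ((univ.val.map y).map (fun t => X - C t)).prod := by
    rw [Multiset.map_map]; rfl
  have hcard : Multiset.card (univ.val.map y) = n := by simp
  rw [h1, Multiset.prod_X_sub_C_coeff _ (by rw [hcard]; exact hj), hcard]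
  congr 1
  rw [Finset.esymm_map_val]
  rfl


lemma polyeval_contDiff (p : ℝ[X]) : ContDiff ℝ (⊤:ℕ∞) (fun z : ℝ => p.eval z) := by
  induction p using Polynomial.induction_on' with
  | monomial mm c => simpa [Polynomial.eval_monomial] using
      (contDiff_const (c := c)).mul (contDiff_id.pow mm)
  | add p q hp hq => simpa [Polynomial.eval_add] using hp.add hq


lemma iteratedDerivWithin_isOpen' {m : ℕ} {s : Set ℝ} {x : ℝ} {F : ℝ → ℝ} (hs : IsOpen s)
    (hx : x ∈ s) : iteratedDerivWithin m F s x = iteratedDeriv m F x := by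
  simp only [iteratedDerivWithin, iteratedDeriv]
  rw [iteratedFDerivWithin_of_isOpen m hs hx]


lemma iteratedDeriv_polyeval (p : ℝ[X]) (m : ℕ) :
    iteratedDeriv m (fun z => p.eval z) = fun z => (Polynomial.derivative^[m] p).eval z := by
  induction m generalizing p with
  | zero => simp
  | succ m IH =>
    rw [iteratedDeriv_succ']
    have : deriv (fun z => p.eval z) = fun z => p.derivative.eval z := by
      funext z; exact Polynomial.deriv (p := p)
    rw [this, IH, Function.iterate_succ_apply]


lemma iter_rolle : ∀ (m : ℕ) (J : Set ℝ), IsOpen J → J.OrdConnected →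
    ∀ F : ℝ → ℝ, ContDiffOn ℝ m F J → ∀ x : Fin (m+1) → ℝ, StrictMono x → (∀ i, x i ∈ J) →
    (∀ i, F (x i) = 0) →
    ∃ ξ ∈ Set.Icc (x 0) (x (Fin.last m)), iteratedDeriv m F ξ = 0 := by
  intro m
  induction m with
  | zero =>
    intro J _ _ F _ x _ _ hF0
    exact ⟨x 0, ⟨le_refl _, le_refl _⟩, by simpa using hF0 0⟩
  | succ m IH =>
    intro J hJo hJc F hF x hx hxJ hF0
    have hcont : ∀ i : Fin (m+1), ∃ c ∈ Set.Ioo (x i.castSucc) (x i.succ), deriv F c = 0 := by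
      intro i
      have hlt : x i.castSucc < x i.succ := hx (Fin.castSucc_lt_succ (i := i))
      have hsub : Set.Icc (x i.castSucc) (x i.succ) ⊆ J := hJc.out (hxJ _) (hxJ _)
      exact exists_deriv_eq_zero hlt ((hF.continuousOn).mono hsub)
        ((hF0 _).trans (hF0 _).symm)
    choose c hc hdc using hcont
    have hcs : StrictMono c := by
      intro i j hij
      have h1 : c i < x i.succ := (hc i).2
      have h2 : x j.castSucc < c j := (hc j).1
      have h3 : x i.succ ≤ x j.castSucc := hx.monotone (Fin.succ_le_castSucc_iff.mpr hij)
      linarith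
    have hcJ : ∀ i, c i ∈ J := by
      intro i
      exact hJc.out (hxJ i.castSucc) (hxJ i.succ) ⟨(hc i).1.le, (hc i).2.le⟩
    have hdF : ContDiffOn ℝ m (deriv F) J := by
      apply hF.deriv_of_isOpen hJo
      norm_cast
    obtain ⟨ξ, hξ, hξ0⟩ := IH J hJo hJc (deriv F) hdF c hcs hcJ hdc
    refine ⟨ξ, ⟨?_, ?_⟩, ?_⟩
    · have : x 0 ≤ c 0 := by
        have := (hc 0).1
        simpa using this.le
      exact this.trans hξ.1
    · have h1 : c (Fin.last m) < x (Fin.last m).succ := (hc _).2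
      have : (Fin.last m).succ = Fin.last (m+1) := rfl
      exact hξ.2.trans (by rw [this] at h1; exact h1.le)
    · rw [iteratedDeriv_succ']
      exact hξ0


lemma divdiff_mvt (m : ℕ) (J : Set ℝ) (hJo : IsOpen J) (hJc : J.OrdConnected)
    (g : ℝ → ℝ) (hg : ContDiffOn ℝ m g J) (x : Fin (m+1) → ℝ) (hx : StrictMono x)
    (hxJ : ∀ i, x i ∈ J) :
    ∃ ξ ∈ Set.Icc (x 0) (x (Fin.last m)),
      iteratedDeriv m g ξ =
        (Nat.factorial m : ℝ) * ∑ i, g (x i) / ∏ j ∈ Finset.univ.erase i, (x i - x j) := by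
  classical
  set d : Fin (m+1) → ℝ := fun i => ∏ j ∈ Finset.univ.erase i, (x i - x j) with hd
  have hdne : ∀ i, d i ≠ 0 := by
    intro i
    refine Finset.prod_ne_zero_iff.mpr ?_
    intro j hj
    have : j ≠ i := (Finset.mem_erase.mp hj).1
    exact sub_ne_zero_of_ne (fun hh => this (hx.injective hh.symm))
  set D : ℝ := ∑ i, g (x i) / d i with hD
  set P : ℝ[X] := ∑ i, C (g (x i) / d i) * ∏ j ∈ Finset.univ.erase i, (X - C (x j)) with hP
  have hmon : ∀ i : Fin (m+1), (∏ j ∈ Finset.univ.erase i, (X - C (x j))).Monic :=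
    fun i => monic_prod_of_monic _ _ (fun j _ => monic_X_sub_C _)
  have hdeg : ∀ i : Fin (m+1), (∏ j ∈ Finset.univ.erase i, (X - C (x j))).natDegree = m := by
    intro i
    rw [natDegree_prod_of_monic _ _ (fun j _ => monic_X_sub_C _)]
    simp [Finset.card_erase_of_mem]
  have hPdeg : P.natDegree ≤ m := by
    apply Polynomial.natDegree_sum_le_of_forall_le
    intro i _
    exact (natDegree_C_mul_le _ _).trans (le_of_eq (hdeg i))
  have hPcoeff : P.coeff m = D := by
    rw [hP, Polynomial.finset_sum_coeff]
    refine Finset.sum_congr rfl (fun i _ => ?_)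
    rw [Polynomial.coeff_C_mul]
    have : (∏ j ∈ Finset.univ.erase i, (X - C (x j))).coeff m = 1 := by
      have := (hmon i).coeff_natDegree
      rwa [hdeg i] at this
    rw [this, mul_one]
  have hPeval : ∀ i, P.eval (x i) = g (x i) := by
    intro i
    rw [hP, Polynomial.eval_finset_sum]
    rw [Finset.sum_eq_single i]
    · rw [Polynomial.eval_mul, Polynomial.eval_C, Polynomial.eval_prod]
      have h2 : (∏ j ∈ Finset.univ.erase i, ((X - C (x j)).eval (x i))) = d i := by
        refine Finset.prod_congr rfl (fun j _ => by simp)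
      rw [h2, div_mul_cancel₀ _ (hdne i)]
    · intro b _ hbi
      rw [Polynomial.eval_mul, Polynomial.eval_prod]
      have : ∃ j ∈ Finset.univ.erase b, ((X - C (x j)).eval (x i)) = 0 := by
        refine ⟨i, Finset.mem_erase.mpr ⟨fun hh => hbi hh.symm, Finset.mem_univ _⟩, by simp⟩
      obtain ⟨j, hj, hj0⟩ := this
      rw [Finset.prod_eq_zero hj hj0, mul_zero]
    · intro hi; exact absurd (Finset.mem_univ i) hi
  set F : ℝ → ℝ := fun z => g z - P.eval z with hFdef
  have hPc' : ContDiffOn ℝ m (fun z : ℝ => P.eval z) J :=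
    ((polyeval_contDiff P).of_le (by exact_mod_cast le_top)).contDiffOn
  have hFcd : ContDiffOn ℝ m F J := hg.sub hPc'
  have hF0 : ∀ i, F (x i) = 0 := fun i => by simp [hFdef, hPeval i]
  obtain ⟨ξ, hξmem, hξ0⟩ := iter_rolle m J hJo hJc F hFcd x hx hxJ hF0
  have hξJ : ξ ∈ J := hJc.out (hxJ 0) (hxJ (Fin.last m)) hξmem
  refine ⟨ξ, hξmem, ?_⟩
  have h1 : iteratedDeriv m F ξ = iteratedDeriv m g ξ - iteratedDeriv m (fun z => P.eval z) ξ := by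
    rw [← iteratedDerivWithin_isOpen' hJo hξJ, ← iteratedDerivWithin_isOpen' (F := g) hJo hξJ,
      ← iteratedDerivWithin_isOpen' (F := fun z => P.eval z) hJo hξJ]
    exact iteratedDerivWithin_sub hξJ hJo.uniqueDiffOn (hg ξ hξJ) (hPc' ξ hξJ)
  have h2 : iteratedDeriv m (fun z => P.eval z) ξ = (Nat.factorial m : ℝ) * D := by
    rw [iteratedDeriv_polyeval]
    have hq : (Polynomial.derivative^[m] P) = C ((Nat.factorial m : ℝ) * D) := by
      have hdq : (Polynomial.derivative^[m] P).natDegree ≤ 0 := by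
        refine (Polynomial.natDegree_iterate_derivative P m).trans ?_
        omega
      have := Polynomial.eq_C_of_natDegree_le_zero hdq
      rw [this, Polynomial.coeff_iterate_derivative]
      congr 1
      rw [zero_add, hPcoeff, Nat.descFactorial_self, nsmul_eq_mul]
    rw [hq]
    simp
  rw [h1, h2] at hξ0
  linarith [hξ0]


lemma roots_exist (n k : ℕ) (hn : 2 ≤ n) (hk : k < n) (a : Fin n → ℝ) (ha : StrictMono a)
    (r B : ℝ) (hr : 0 < r)
    (hgap : ∀ i j : Fin n, i < j → a i + 3*r ≤ a j)
    (hB : ∀ i, |a i| + r ≤ B)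
    (ε : ℝ) (hε : 0 < ε) (hεB : ε * B ^ k < r ^ n) :
    ∃ b : Fin n → ℝ, (∀ i, |b i - a i| < r) ∧
      (∀ j, j < n → j ≠ k → E n j b = E n j a) ∧ (E n k b = E n k a + ε) ∧
      (∀ i, (b i - a i) * ∏ l ∈ Finset.univ.erase i, (b i - a l)
          = -(-1:ℝ)^(n-k) * ε * b i ^ k) := by
  classical
  set c : ℝ := (-1:ℝ)^(n-k) with hc
  set p0 : ℝ[X] := ∏ i, (X - C (a i)) with hp0
  set pe : ℝ[X] := p0 + C (c*ε) * X^k with hpe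
  have hp0eval : ∀ t : ℝ, p0.eval t = ∏ j, (t - a j) := by
    intro t; simp [hp0, Polynomial.eval_prod]
  have hpeeval : ∀ t : ℝ, pe.eval t = p0.eval t + c * ε * t^k := by
    intro t; simp [hpe]
  have hBpos : 0 < B := lt_of_lt_of_le (by positivity) (hB ⟨0, by omega⟩)
  have hpert : ∀ t : ℝ, (∃ i, |t - a i| ≤ r) → |c * ε * t^k| < r^n := by
    intro t ⟨i, hti⟩
    have h1 : |t| ≤ B := by
      have := abs_sub_abs_le_abs_sub t (a i)
      have h2 := hB i
      have h3 : |t - a i| ≤ r := hti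
      linarith
    have habs : |c * ε * t^k| = ε * |t|^k := by
      rw [abs_mul, abs_mul, hc, abs_pow, abs_neg, abs_one, one_pow, one_mul, abs_of_pos hε,
        abs_pow]
    rw [habs]
    calc ε * |t|^k ≤ ε * B^k := by
          have := pow_le_pow_left₀ (abs_nonneg t) h1 k
          nlinarith
      _ < r^n := hεB
  have hlow : ∀ (i : Fin n) (t : ℝ), |t - a i| = r → r^n ≤ |p0.eval t| := by
    intro i t ht
    rw [hp0eval, abs_prod]
    have h1 : ∀ j ∈ (univ : Finset (Fin n)), r ≤ |t - a j| := by
      intro j _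
      rcases eq_or_ne j i with rfl | hji
      · exact ht.ge
      · have hgap' : 3*r ≤ |a i - a j| := by
          rcases lt_or_ge j i with hj | hj
          · have := hgap j i hj
            rw [abs_of_pos (by linarith)]; linarith
          · have hij : i < j := lt_of_le_of_ne hj (Ne.symm hji)
            have := hgap i j hij
            rw [abs_of_neg (by linarith)]; linarith
        have h2 := abs_sub_abs_le_abs_sub (a i - a j) (a i - t)
        have h3 : (a i - a j) - (a i - t) = t - a j := by ring
        rw [h3] at h2
        have h4 : |a i - t| = r := by rwa [abs_sub_comm]
        linarith
    calc r^n = ∏ _j ∈ (univ : Finset (Fin n)), r := by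
          rw [Finset.prod_const, Finset.card_univ, Fintype.card_fin]
      _ ≤ ∏ j, |t - a j| := Finset.prod_le_prod (fun _ _ => hr.le) h1
  have hsign : ∀ (i : Fin n) (t : ℝ), |t - a i| = r → pe.eval t * p0.eval t > 0 := by
    intro i t ht
    have h1 := hlow i t ht
    have h2 := hpert t ⟨i, ht.le⟩
    have h3 : |c * ε * t ^ k| < |p0.eval t| := lt_of_lt_of_le h2 h1
    have hpp : p0.eval t * p0.eval t = |p0.eval t| * |p0.eval t| :=
      (abs_mul_abs_self _).symm
    have hsp : -( |c * ε * t ^ k| * |p0.eval t| ) ≤ c * ε * t ^ k * p0.eval t := by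
      have := neg_abs_le (c * ε * t ^ k * p0.eval t)
      rwa [abs_mul] at this
    have habspos : 0 < |p0.eval t| := lt_of_lt_of_le (by positivity) h1
    rw [hpeeval]
    nlinarith
  have hopp : ∀ i : Fin n, p0.eval (a i - r) * p0.eval (a i + r) < 0 := by
    intro i
    rw [hp0eval, hp0eval, ← Finset.prod_mul_distrib]
    rw [← Finset.mul_prod_erase _ _ (Finset.mem_univ i)]
    have hfaci : (a i - r - a i) * (a i + r - a i) < 0 := by nlinarith
    have hrest : 0 < ∏ j ∈ univ.erase i, (a i - r - a j) * (a i + r - a j) := by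
      apply Finset.prod_pos
      intro j hj
      have hji : j ≠ i := (Finset.mem_erase.mp hj).1
      rcases lt_or_gt_of_ne hji with hj1 | hj1
      · have := hgap j i hj1
        have h1 : 0 < a i - r - a j := by linarith
        have h2 : 0 < a i + r - a j := by linarith
        positivity
      · have := hgap i j hj1
        nlinarith
    nlinarith
  have hroot : ∀ i : Fin n, ∃ b ∈ Set.Ioo (a i - r) (a i + r), pe.eval b = 0 := by
    intro i
    have hu' : |a i - r - a i| = r := by
      rw [show a i - r - a i = -r by ring, abs_neg, abs_of_pos hr]
    have hv' : |a i + r - a i| = r := by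
      rw [show a i + r - a i = r by ring, abs_of_pos hr]
    have h1 : pe.eval (a i - r) * pe.eval (a i + r) < 0 := by
      nlinarith [hopp i, mul_pos (hsign i _ hu') (hsign i _ hv')]
    have hcontOn : ContinuousOn (fun t => pe.eval t) (Set.Icc (a i - r) (a i + r)) :=
      pe.continuous.continuousOn
    have hle : a i - r ≤ a i + r := by linarith
    rcases lt_trichotomy (pe.eval (a i - r)) 0 with hneg | hzero | hpos
    · have hvpos : 0 < pe.eval (a i + r) := by nlinarith
      obtain ⟨b, hb, hb0⟩ := intermediate_value_Ioo hle hcontOn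
        (Set.mem_Ioo.mpr ⟨hneg, hvpos⟩)
      exact ⟨b, hb, hb0⟩
    · rw [hzero] at h1; nlinarith
    · have hvneg : pe.eval (a i + r) < 0 := by nlinarith
      obtain ⟨b, hb, hb0⟩ := intermediate_value_Ioo' hle hcontOn
        (Set.mem_Ioo.mpr ⟨hvneg, hpos⟩)
      exact ⟨b, hb, hb0⟩
  choose b hbmem hbeval using hroot
  have hbr : ∀ i, |b i - a i| < r := by
    intro i
    rw [abs_sub_lt_iff]
    exact ⟨by linarith [(hbmem i).2], by linarith [(hbmem i).1]⟩
  have hbs : StrictMono b := by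
    intro i j hij
    have := hgap i j hij
    have h1 := (hbmem i).2
    have h2 := (hbmem j).1
    linarith
  -- pe = ∏ (X - C (b i))
  have hp0monic : p0.Monic := monic_prod_of_monic _ _ (fun i _ => monic_X_sub_C _)
  have hp0deg : p0.natDegree = n := by
    rw [hp0, natDegree_prod_of_monic _ _ (fun i _ => monic_X_sub_C _)]
    simp
  have hp0degree : p0.degree = (n : WithBot ℕ) := by
    rw [degree_eq_natDegree hp0monic.ne_zero, hp0deg]
  have hCXdeg : (C (c*ε) * X^k).degree < p0.degree := by
    refine lt_of_le_of_lt (degree_C_mul_X_pow_le k _) ?_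
    rw [hp0degree]
    exact_mod_cast hk
  have hpemonic : pe.Monic := hp0monic.add_of_left hCXdeg
  have hpedegree : pe.degree = (n : WithBot ℕ) := by
    rw [hpe, degree_add_eq_left_of_degree_lt hCXdeg, hp0degree]
  have hpbmonic : (∏ i, (X - C (b i))).Monic := monic_prod_of_monic _ _ (fun i _ => monic_X_sub_C _)
  have hpbdegree : (∏ i, (X - C (b i))).degree = (n : WithBot ℕ) := by
    rw [degree_eq_natDegree hpbmonic.ne_zero,
      natDegree_prod_of_monic _ _ (fun i _ => monic_X_sub_C _)]
    simp
  have heq : pe = ∏ i, (X - C (b i)) := by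
    apply Polynomial.eq_of_degree_sub_lt_of_eval_index_eq (univ : Finset (Fin n))
      (Set.InjOn.mono (Set.subset_univ _) (hbs.injective.injOn))
    · have hlt := degree_sub_lt (hpedegree.trans hpbdegree.symm) hpemonic.ne_zero
        (hpemonic.leadingCoeff.trans hpbmonic.leadingCoeff.symm)
      rw [hpedegree] at hlt
      simpa using hlt
    · intro i _
      rw [hbeval i, Polynomial.eval_prod]
      symm
      apply Finset.prod_eq_zero (Finset.mem_univ i)
      simp
  -- coefficient comparison
  have hcoeff : ∀ j, j ≤ n → (-1:ℝ)^(n-j) * E n j b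
      = (-1:ℝ)^(n-j) * E n j a + (if j = k then c * ε else 0) := by
    intro j hj
    have h1 : (∏ i, (X - C (b i))).coeff j = pe.coeff j := by rw [heq]
    rw [coeff_prod_X_sub_C' n j b hj] at h1
    rw [h1, hpe, Polynomial.coeff_add, Polynomial.coeff_C_mul, Polynomial.coeff_X_pow]
    rw [hp0, coeff_prod_X_sub_C' n j a hj]
    by_cases hjk : j = k <;> simp [hjk, eq_comm]
  have hEne : ∀ j, j < n → j ≠ k → E n j b = E n j a := by
    intro j hjn hjk
    have := hcoeff j hjn.le
    rw [if_neg hjk, add_zero] at this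
    have h2 : ((-1:ℝ)^(n-j)) ≠ 0 := pow_ne_zero _ (by norm_num)
    exact mul_left_cancel₀ h2 this
  have hEk : E n k b = E n k a + ε := by
    have := hcoeff k hk.le
    rw [if_pos rfl, hc] at this
    have h2 : ((-1:ℝ)^(n-k)) ≠ 0 := by apply pow_ne_zero; norm_num
    have h3 : (-1:ℝ)^(n-k) * E n k b = (-1:ℝ)^(n-k) * (E n k a + ε) := by
      rw [this]; ring
    exact mul_left_cancel₀ h2 h3
  refine ⟨b, hbr, hEne, hEk, ?_⟩
  intro i
  have h0 := hbeval i
  rw [hpeeval, hp0eval] at h0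
  rw [← Finset.mul_prod_erase _ _ (Finset.mem_univ i)] at h0
  linarith [h0]


lemma core (n k : ℕ) (hn : 2 ≤ n) (hk : k < n) (I : Set ℝ) (hIopen : IsOpen I)
    (S : Finset ℕ) (hS : S ⊆ Finset.range n) (hkS : k ∈ S)
    (f : ℝ → ℝ) (hf : ContDiffOn ℝ n f I)
    (h : ∀ a b : Fin n → ℝ, (∀ i, a i ∈ I) → (∀ i, b i ∈ I) →
      Monotone a → Monotone b →
      (∀ k ∈ S, E n k a ≤ E n k b) → (∀ k < n, k ∉ S → E n k a = E n k b) →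
      ∑ i, f (a i) ≤ ∑ i, f (b i))
    (a : Fin n → ℝ) (ha : StrictMono a) (haI : ∀ i, a i ∈ I) :
    (-1:ℝ)^(n+k) * ∑ i, (a i ^ k * deriv f (a i)) / ∏ j ∈ Finset.univ.erase i, (a i - a j)
      ≤ 0 := by
  classical
  have i0 : Fin n := ⟨0, by omega⟩
  haveI : Nonempty (Fin n) := ⟨i0⟩
  -- choose radii
  have hρ : ∀ i : Fin n, ∃ ρ > 0, Metric.ball (a i) ρ ⊆ I := by
    intro i
    obtain ⟨ρ, hρ1, hρ2⟩ := Metric.isOpen_iff.mp hIopen (a i) (haI i)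
    exact ⟨ρ, hρ1, hρ2⟩
  choose ρ hρpos hρball using hρ
  -- min gap over ordered pairs
  set P : Finset (Fin n × Fin n) :=
    (Finset.univ ×ˢ Finset.univ).filter (fun p => p.1 < p.2) with hP
  have hPne : P.Nonempty := by
    refine ⟨(⟨0, by omega⟩, ⟨1, by omega⟩), ?_⟩
    simp [hP, Fin.mk_lt_mk]
  set gmin : ℝ := P.inf' hPne (fun p => a p.2 - a p.1) with hgmin
  have hgmin_pos : 0 < gmin := by
    rw [hgmin, Finset.lt_inf'_iff]
    intro p hp
    have : p.1 < p.2 := (Finset.mem_filter.mp hp).2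
    exact sub_pos.mpr (ha this)
  have hgmin_le : ∀ i j : Fin n, i < j → gmin ≤ a j - a i := by
    intro i j hij
    have hmemP : (i, j) ∈ P := by rw [hP]; simp [hij]
    exact Finset.inf'_le (f := fun p => a p.2 - a p.1) hmemP
  set ρmin : ℝ := Finset.univ.inf' (Finset.univ_nonempty (α := Fin n)) ρ with hρmin
  have hρmin_pos : 0 < ρmin := by
    rw [hρmin, Finset.lt_inf'_iff]
    exact fun i _ => hρpos i
  set r : ℝ := min (ρmin/2) (gmin/3) with hrdef
  have hr : 0 < r := lt_min (by linarith) (by linarith)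
  have hgap : ∀ i j : Fin n, i < j → a i + 3*r ≤ a j := by
    intro i j hij
    have h1 := hgmin_le i j hij
    have h2 : r ≤ gmin/3 := min_le_right _ _
    linarith
  have hball : ∀ (i : Fin n) (t : ℝ), |t - a i| ≤ r → t ∈ I := by
    intro i t ht
    apply hρball i
    rw [Metric.mem_ball, Real.dist_eq]
    have h2 : r ≤ ρmin/2 := min_le_left _ _
    have h3 : ρmin ≤ ρ i := Finset.inf'_le _ (Finset.mem_univ i)
    have := hρpos i
    linarith
  set B : ℝ := Finset.univ.sup' (Finset.univ_nonempty (α := Fin n)) (fun i => |a i|) + r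
    with hBdef
  have hB : ∀ i, |a i| + r ≤ B := by
    intro i
    have h1 : |a i| ≤ Finset.univ.sup' (Finset.univ_nonempty (α := Fin n)) (fun i => |a i|) :=
      Finset.le_sup' (fun i => |a i|) (Finset.mem_univ i)
    rw [hBdef]; linarith
  have hBpos : 0 < B := lt_of_lt_of_le (by positivity) (hB i0)
  set ε₀ : ℝ := r^n / (B^k + 1) with hε₀
  have hε₀pos : 0 < ε₀ := by positivity
  set l : Filter ℝ := nhdsWithin 0 (Set.Ioi 0) with hl
  have hmem : ∀ᶠ ε in l, ε ∈ Set.Ioo (0:ℝ) ε₀ :=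
    Ioo_mem_nhdsGT_of_mem ⟨le_refl 0, hε₀pos⟩
  have hex : ∀ᶠ ε in l, ∃ b : Fin n → ℝ, (∀ i, |b i - a i| < r) ∧
      (∀ j, j < n → j ≠ k → E n j b = E n j a) ∧ (E n k b = E n k a + ε) ∧
      (∀ i, (b i - a i) * ∏ l' ∈ Finset.univ.erase i, (b i - a l')
          = -(-1:ℝ)^(n-k) * ε * b i ^ k) := by
    filter_upwards [hmem] with ε hε
    refine roots_exist n k hn hk a ha r B hr hgap hB ε hε.1 ?_
    have h1 : ε < ε₀ := hε.2
    have h2 : ε * (B^k + 1) < r^n := by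
      rw [hε₀] at h1
      exact (lt_div_iff₀ (by positivity)).mp h1
    nlinarith [hε.1]
  obtain ⟨bb, hbb⟩ := hex.choice
  set c : ℝ := (-1:ℝ)^(n-k) with hc
  set Q : Fin n → ℝ := fun i => ∏ j ∈ Finset.univ.erase i, (a i - a j) with hQ
  have hQne : ∀ i, Q i ≠ 0 := by
    intro i
    refine Finset.prod_ne_zero_iff.mpr ?_
    intro j hj
    exact sub_ne_zero_of_ne (fun hh => (Finset.mem_erase.mp hj).1 (ha.injective hh.symm))
  set w : Fin n → ℝ := fun i => -c * a i ^ k / Q i with hw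
  -- eventual bound
  have hbound : ∀ i : Fin n, ∀ᶠ ε in l, |bb ε i - a i| ≤ (B^k / r^(n-1)) * ε := by
    intro i
    filter_upwards [hbb, hmem] with ε hb hε
    obtain ⟨hb1, _, _, hb4⟩ := hb
    have hblow : ∀ l' ∈ Finset.univ.erase i, 2*r ≤ |bb ε i - a l'| := by
      intro l' hl'
      have hne : l' ≠ i := (Finset.mem_erase.mp hl').1
      have h3r : 3*r ≤ |a i - a l'| := by
        rcases lt_or_gt_of_ne hne with h1 | h1
        · have := hgap l' i h1
          rw [abs_of_pos (by linarith)]; linarith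
        · have := hgap i l' h1
          rw [abs_of_neg (by linarith)]; linarith
      have h2 := abs_sub_abs_le_abs_sub (a i - a l') (a i - bb ε i)
      rw [show (a i - a l') - (a i - bb ε i) = bb ε i - a l' by ring] at h2
      have h4 : |a i - bb ε i| < r := by rw [abs_sub_comm]; exact hb1 i
      linarith
    have hprodlow : r^(n-1) ≤ |∏ l' ∈ Finset.univ.erase i, (bb ε i - a l')| := by
      rw [Finset.abs_prod]
      calc r^(n-1) = ∏ _l' ∈ Finset.univ.erase i, r := by
            rw [Finset.prod_const, Finset.card_erase_of_mem (Finset.mem_univ i)]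
            simp
        _ ≤ ∏ l' ∈ Finset.univ.erase i, |bb ε i - a l'| :=
            Finset.prod_le_prod (fun _ _ => hr.le) (fun j hj => by linarith [hblow j hj])
    have habs : |bb ε i - a i| * |∏ l' ∈ Finset.univ.erase i, (bb ε i - a l')|
        = ε * |bb ε i|^k := by
      rw [← abs_mul, hb4 i, abs_mul, abs_mul, hc, abs_neg, abs_pow, abs_neg, abs_one,
        one_pow, abs_of_pos hε.1, abs_pow, one_mul]
    have hbB : |bb ε i| ≤ B := by
      have h1 := hb1 i
      have h2 := hB i
      have h3 := abs_sub_abs_le_abs_sub (bb ε i) (a i)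
      linarith
    have h5 : |bb ε i - a i| * r^(n-1) ≤ ε * B^k := by
      have h6 : ε * |bb ε i|^k ≤ ε * B^k := by
        have := pow_le_pow_left₀ (abs_nonneg _) hbB k
        nlinarith [hε.1]
      nlinarith [abs_nonneg (bb ε i - a i)]
    rw [div_mul_eq_mul_div, le_div_iff₀ (by positivity)]
    nlinarith [h5]
  have hT1 : ∀ i : Fin n, Tendsto (fun ε => bb ε i) l (𝓝 (a i)) := by
    intro i
    have h0 : Tendsto (fun ε : ℝ => (B^k / r^(n-1)) * ε) l (𝓝 0) := by
      have h1 : Tendsto (fun ε : ℝ => ε) l (𝓝 0) :=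
        tendsto_id.mono_left nhdsWithin_le_nhds
      simpa using h1.const_mul (B^k / r^(n-1))
    have h2 : Tendsto (fun ε => |bb ε i - a i|) l (𝓝 0) :=
      squeeze_zero' (by filter_upwards with ε; exact abs_nonneg _) (hbound i) h0
    have h3 : Tendsto (fun ε => bb ε i - a i) l (𝓝 0) :=
      (tendsto_zero_iff_abs_tendsto_zero _).mpr h2
    have h4 := h3.add tendsto_const_nhds (f := fun ε => bb ε i - a i) (b := a i)
    simpa using h4
  -- quotient limit
  have hT3 : ∀ i : Fin n, Tendsto (fun ε => (bb ε i - a i)/ε) l (𝓝 (w i)) := by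
    intro i
    have hcont : Tendsto (fun t => -c * t^k / ∏ l' ∈ Finset.univ.erase i, (t - a l'))
        (𝓝 (a i)) (𝓝 (w i)) := by
      rw [hw]
      apply Tendsto.div
      · exact (tendsto_const_nhds.mul ((continuous_pow k).tendsto _))
      · exact tendsto_finset_prod _ (fun j _ => by
          exact (continuous_id.sub continuous_const).tendsto _)
      · exact hQne i
    have hcomp := hcont.comp (hT1 i)
    apply hcomp.congr'
    filter_upwards [hbb, hmem, hbound i] with ε hb hε hbd
    obtain ⟨hb1, _, _, hb4⟩ := hb
    have hprodne : (∏ l' ∈ Finset.univ.erase i, (bb ε i - a l')) ≠ 0 := by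
      refine Finset.prod_ne_zero_iff.mpr (fun j hj => ?_)
      have hne : j ≠ i := (Finset.mem_erase.mp hj).1
      have h3r : 3*r ≤ |a i - a j| := by
        rcases lt_or_gt_of_ne hne with h1 | h1
        · have := hgap j i h1
          rw [abs_of_pos (by linarith)]; linarith
        · have := hgap i j h1
          rw [abs_of_neg (by linarith)]; linarith
      have h2 := abs_sub_abs_le_abs_sub (a i - a j) (a i - bb ε i)
      rw [show (a i - a j) - (a i - bb ε i) = bb ε i - a j by ring] at h2
      have h4 : |a i - bb ε i| < r := by rw [abs_sub_comm]; exact hb1 i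
      intro hzero
      rw [hzero, abs_zero] at h2
      linarith
    have := hb4 i
    rw [Function.comp_apply, div_eq_div_iff hprodne hε.1.ne']
    linarith [this]
  have hT4 : ∀ i : Fin n, Tendsto (fun ε => (f (bb ε i) - f (a i))/ε) l
      (𝓝 (deriv f (a i) * w i)) := by
    intro i
    have hdiff : DifferentiableAt ℝ f (a i) :=
      (hf.contDiffAt (hIopen.mem_nhds (haI i))).differentiableAt
        (by exact_mod_cast (by omega : n ≠ 0))
    have hlo := hasDerivAt_iff_isLittleO.mp hdiff.hasDerivAt
    have hcomp := hlo.comp_tendsto (hT1 i)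
    have hbig : (fun ε => bb ε i - a i) =O[l] (fun ε => ε) := by
      rw [Asymptotics.isBigO_iff]
      refine ⟨B^k / r^(n-1), ?_⟩
      filter_upwards [hbound i, hmem] with ε h1 h2
      rw [Real.norm_eq_abs, Real.norm_eq_abs, abs_of_pos h2.1]
      exact h1
    have hsmall := hcomp.trans_isBigO hbig
    have h0 := hsmall.tendsto_div_nhds_zero
    have hmul := (hT3 i).const_mul (deriv f (a i))
    have hadd := h0.add hmul
    rw [zero_add] at hadd
    apply hadd.congr
    intro ε
    simp only [Function.comp_apply, smul_eq_mul]
    ring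
  have hTsum : Tendsto (fun ε => (∑ i, f (bb ε i) - ∑ i, f (a i))/ε) l
      (𝓝 (∑ i, deriv f (a i) * w i)) := by
    have hts := tendsto_finset_sum Finset.univ (fun (i : Fin n) (_ : i ∈ Finset.univ) => hT4 i)
    apply hts.congr
    intro ε
    rw [← Finset.sum_sub_distrib, Finset.sum_div]
  have hnonneg : ∀ᶠ ε in l, 0 ≤ (∑ i, f (bb ε i) - ∑ i, f (a i))/ε := by
    filter_upwards [hbb, hmem] with ε hb hε
    obtain ⟨hb1, hb2, hb3, _⟩ := hb
    have hbmono : StrictMono (bb ε) := by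
      intro i j hij
      have hgp := hgap i j hij
      have h1 := (abs_sub_lt_iff.mp (hb1 i)).1
      have h2 := (abs_sub_lt_iff.mp (hb1 j)).2
      linarith
    have hbI : ∀ i, bb ε i ∈ I := fun i => hball i _ (le_of_lt (hb1 i))
    have hle := h a (bb ε) haI hbI ha.monotone hbmono.monotone
      (by
        intro k' hk'
        by_cases hkk : k' = k
        · subst hkk
          rw [hb3]
          linarith [hε.1]
        · exact le_of_eq (hb2 k' (Finset.mem_range.mp (hS hk')) hkk).symm)
      (by
        intro j hj hjS
        exact (hb2 j hj (fun hh => hjS (hh ▸ hkS))).symm)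
    exact div_nonneg (by linarith) hε.1.le
  have hge : 0 ≤ ∑ i, deriv f (a i) * w i := ge_of_tendsto hTsum hnonneg
  have hsum : ∑ i, deriv f (a i) * w i
      = -c * ∑ i, (a i ^ k * deriv f (a i)) / Q i := by
    rw [Finset.mul_sum]
    refine Finset.sum_congr rfl (fun i _ => ?_)
    simp only [hw]
    ring
  have hpow : (-1:ℝ)^(n+k) = c := by
    rw [hc]
    have hnk : n + k = (n - k) + 2*k := by omega
    rw [hnk, pow_add, pow_mul, neg_one_sq, one_pow, mul_one]
  rw [hpow]
  rw [hsum] at hge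
  linarith

theorem necessity_of_differential_inequality
    (n : ℕ) (hn : 2 ≤ n) (I : Set ℝ) (hIopen : IsOpen I) (hIconn : I.OrdConnected)
    (S : Finset ℕ) (hS : S ⊆ Finset.range n)
    (f : ℝ → ℝ) (hf : ContDiffOn ℝ n f I)
    (h : ∀ a b : Fin n → ℝ, (∀ i, a i ∈ I) → (∀ i, b i ∈ I) →
      Monotone a → Monotone b →
      (∀ k ∈ S, E n k a ≤ E n k b) → (∀ k < n, k ∉ S → E n k a = E n k b) →
      ∑ i, f (a i) ≤ ∑ i, f (b i)) :
    ∀ x ∈ I, ∀ k ∈ S, (-1 : ℝ) ^ (n + k) *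
      iteratedDerivWithin (n - 1) (fun z => z ^ k * derivWithin f I z) I x ≤ 0 := by
  obtain ⟨m, rfl⟩ : ∃ m, n = m + 1 := ⟨n - 1, by omega⟩
  intro x hx k hkS
  have hk : k < m + 1 := Finset.mem_range.mp (hS hkS)
  set g : ℝ → ℝ := fun z => z ^ k * deriv f z with hgdef
  -- rewrite the goal as a statement about iteratedDeriv of g
  have hgoal_eq : iteratedDerivWithin (m + 1 - 1) (fun z => z ^ k * derivWithin f I z) I x
      = iteratedDeriv m g x := by
    have h1 : Set.EqOn (fun z => z ^ k * derivWithin f I z) g I := by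
      intro z hz
      simp only [hgdef]
      rw [derivWithin_of_isOpen hIopen hz]
    have h2 := iteratedDerivWithin_congr h1 (n := m) hx
    simpa [iteratedDerivWithin_isOpen' hIopen hx] using h2
  rw [hgoal_eq]
  -- smoothness of g on I
  have hg : ContDiffOn ℝ m g I := by
    apply ContDiffOn.mul
    · exact (contDiff_id.pow k).contDiffOn
    · exact hf.deriv_of_isOpen hIopen (by exact_mod_cast le_refl (m+1))
  -- continuity of iterated derivative of g
  have hcont : ContinuousOn (iteratedDeriv m g) I := by
    have h1 := hg.continuousOn_iteratedDerivWithin (le_refl _) hIopen.uniqueDiffOn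
    exact h1.congr (fun z hz => (iteratedDerivWithin_isOpen' hIopen hz).symm)
  by_contra hpos
  push_neg at hpos
  set cst : ℝ := (-1:ℝ)^(m + 1 + k) with hcst
  have hca : ContinuousAt (fun z => cst * iteratedDeriv m g z) x :=
    (((hcont x hx).continuousAt (hIopen.mem_nhds hx)).const_mul cst)
  have hev : ∀ᶠ z in 𝓝 x, 0 < cst * iteratedDeriv m g z :=
    hca.eventually (eventually_gt_nhds hpos)
  obtain ⟨ρ, hρpos, hρ⟩ := Metric.eventually_nhds_iff.mp hev
  obtain ⟨ρ2, hρ2pos, hρ2⟩ := Metric.isOpen_iff.mp hIopen x hx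
  set ρ' : ℝ := min ρ ρ2 with hρ'
  have hρ'pos : 0 < ρ' := lt_min hρpos hρ2pos
  set δ : ℝ := ρ' / (2 * (m + 1)) with hδ
  have hδpos : 0 < δ := by positivity
  set aδ : Fin (m+1) → ℝ := fun i => x + ((i : ℕ) + 1) * δ with haδ
  have haδs : StrictMono aδ := by
    intro i j hij
    have : (i : ℕ) < (j : ℕ) := hij
    simp only [haδ]
    have h2 : ((i:ℕ) + 1 : ℝ) < ((j:ℕ) + 1 : ℝ) := by exact_mod_cast Nat.succ_lt_succ this
    nlinarith
  have haδball : ∀ i, |aδ i - x| < ρ' := by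
    intro i
    have h1 : ((i:ℕ) : ℝ) + 1 ≤ (m : ℝ) + 1 := by
      have := i.isLt
      exact_mod_cast this
    simp only [haδ]
    rw [show x + ((i : ℕ) + 1) * δ - x = ((i : ℕ) + 1) * δ by ring,
      abs_of_pos (by positivity)]
    rw [hδ]
    rw [div_eq_mul_inv]
    have hmp : (0:ℝ) < (m:ℝ) + 1 := by positivity
    calc (((i:ℕ):ℝ) + 1) * (ρ' * (2 * ((m:ℝ) + 1))⁻¹) ≤ ((m:ℝ)+1) * (ρ' * (2 * ((m:ℝ) + 1))⁻¹) := by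
          have : (0:ℝ) ≤ ρ' * (2 * ((m:ℝ) + 1))⁻¹ := by positivity
          nlinarith
      _ = ρ' / 2 := by field_simp
      _ < ρ' := by linarith
  have haδI : ∀ i, aδ i ∈ I := by
    intro i
    apply hρ2
    rw [Metric.mem_ball, Real.dist_eq]
    exact lt_of_lt_of_le (haδball i) (min_le_right _ _)
  -- apply core
  have hcore := core (m+1) k hn hk I hIopen S hS hkS f hf h aδ haδs haδI
  -- apply MVT for divided differences
  obtain ⟨ξ, hξmem, hξeq⟩ := divdiff_mvt m I hIopen hIconn g hg aδ haδs haδI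
  have hξball : |ξ - x| < ρ' := by
    have h1 : aδ 0 ≤ ξ := hξmem.1
    have h2 : ξ ≤ aδ (Fin.last m) := hξmem.2
    have h3 : x < aδ 0 := by
      simp only [haδ]
      have : (0:ℝ) < (((0 : Fin (m+1)):ℕ) + 1) * δ := by positivity
      linarith
    have h4 := haδball (Fin.last m)
    rw [abs_lt] at h4 ⊢
    constructor <;> [linarith; linarith]
  have hev2 : 0 < cst * iteratedDeriv m g ξ := hρ (by rw [Real.dist_eq]; exact lt_of_lt_of_le hξball (min_le_left _ _))
  rw [hξeq] at hev2
  -- hcore : (-1)^(m+1+k) * ∑ ... ≤ 0, and the sums agree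
  have hsum_eq : ∑ i, g (aδ i) / ∏ j ∈ Finset.univ.erase i, (aδ i - aδ j)
      = ∑ i, (aδ i ^ k * deriv f (aδ i)) / ∏ j ∈ Finset.univ.erase i, (aδ i - aδ j) := by
    refine Finset.sum_congr rfl (fun i _ => ?_)
    simp only [hgdef]
  rw [hsum_eq] at hev2
  have hfacpos : (0:ℝ) < (Nat.factorial m : ℝ) := by positivity
  rw [hcst] at hev2
  nlinarith [hcore, hev2, hfacpos]
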